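/- Let ε > 0 and set μ₁ = √ε/2, γ = 1/√(1+ε), μ₂ = (1/2)√(ε/(1+ε)). Then the quartic z⁴ + 2((1+ε)γμ₂ − μ₁)z³ + ((1+ε)γ² − 4γμ₁μ₂ + 1)z² + 2γ(μ₂ − γμ₁)z + γ² equals (z² + 1)(z² + 1/(1+ε)); in particular its complex roots are exactly ±i and ±i/√(1+ε), two pairs of purely imaginary conjugate numbers. -/

import Mathlib

theorem stmt_10 (ε : ℝ) (hε : 0 < ε)
    (μ₁ γ μ₂ : ℝ) (hμ₁ : μ₁ = Real.sqrt ε / 2)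
    (hγ : γ = 1/Real.sqrt (1+ε)) (hμ₂ : μ₂ = (1/2) * Real.sqrt (ε/(1+ε))) :
    (∀ z : ℂ, z^4 + ((2*((1+ε)*γ*μ₂ - μ₁) : ℝ) : ℂ)*z^3
        + (((1+ε)*γ^2 - 4*γ*μ₁*μ₂ + 1 : ℝ) : ℂ)*z^2
        + ((2*γ*(μ₂ - γ*μ₁) : ℝ) : ℂ)*z + ((γ^2 : ℝ) : ℂ)
        = (z^2 + 1) * (z^2 + ((1/(1+ε) : ℝ) : ℂ))) ∧
    (∀ z : ℂ, z^4 + ((2*((1+ε)*γ*μ₂ - μ₁) : ℝ) : ℂ)*z^3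
        + (((1+ε)*γ^2 - 4*γ*μ₁*μ₂ + 1 : ℝ) : ℂ)*z^2
        + ((2*γ*(μ₂ - γ*μ₁) : ℝ) : ℂ)*z + ((γ^2 : ℝ) : ℂ) = 0 ↔
      z = Complex.I ∨ z = -Complex.I ∨
        z = Complex.I / (Real.sqrt (1+ε) : ℂ) ∨ z = -(Complex.I / (Real.sqrt (1+ε) : ℂ))) := by
  set s := Real.sqrt (1+ε) with hsdef
  set e := Real.sqrt ε with hedef
  have h1ε : (0:ℝ) < 1 + ε := by linarith
  have hs2 : s^2 = 1 + ε := Real.sq_sqrt h1ε.le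
  have he2 : e^2 = ε := Real.sq_sqrt hε.le
  have hspos : 0 < s := Real.sqrt_pos.mpr h1ε
  have hsne : s ≠ 0 := hspos.ne'
  have hμ₂' : μ₂ = e / (2*s) := by
    rw [hμ₂, Real.sqrt_div hε.le]
    ring
  have h3 : 2*((1+ε)*γ*μ₂ - μ₁) = 0 := by
    rw [hγ, hμ₂', hμ₁]
    field_simp
    linear_combination (-e)*hs2
  have h1 : 2*γ*(μ₂ - γ*μ₁) = 0 := by
    rw [hγ, hμ₂', hμ₁]
    field_simp
    ring
  have h2 : (1+ε)*γ^2 - 4*γ*μ₁*μ₂ + 1 = 1 + 1/(1+ε) := by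
    rw [hγ, hμ₂', hμ₁]
    field_simp
    linear_combination (-4*(1+ε))*he2 - 4*hs2
  have hg : γ^2 = 1/(1+ε) := by
    rw [hγ]; field_simp; exact hs2.symm
  have hsC : ((s:ℂ))^2 = ((1+ε : ℝ) : ℂ) := by
    norm_cast
  have hsCne : ((s:ℂ)) ≠ 0 := by exact_mod_cast hsne
  have key : ∀ z : ℂ, z^4 + ((2*((1+ε)*γ*μ₂ - μ₁) : ℝ) : ℂ)*z^3
        + (((1+ε)*γ^2 - 4*γ*μ₁*μ₂ + 1 : ℝ) : ℂ)*z^2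
        + ((2*γ*(μ₂ - γ*μ₁) : ℝ) : ℂ)*z + ((γ^2 : ℝ) : ℂ)
        = (z^2 + 1) * (z^2 + ((1/(1+ε) : ℝ) : ℂ)) := by
    intro z
    rw [h3, h1, h2, hg]
    push_cast
    ring
  refine ⟨key, fun z => ?_⟩
  rw [key z]
  have hfac : (z^2 + 1) * (z^2 + ((1/(1+ε) : ℝ) : ℂ))
      = (z - Complex.I) * (z + Complex.I)
        * ((z - Complex.I/(s:ℂ)) * (z + Complex.I/(s:ℂ))) := by
    have h1' : ((1/(1+ε) : ℝ) : ℂ) = 1 / (s:ℂ)^2 := by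
      rw [hsC]; push_cast; ring
    rw [h1']
    field_simp
    ring_nf
    rw [Complex.I_sq]
    norm_num [pow_succ, Complex.I_mul_I]
    ring
  rw [hfac]
  constructor
  · intro h
    rcases mul_eq_zero.mp h with h | h
    · rcases mul_eq_zero.mp h with h | h
      · left; linear_combination h
      · right; left; linear_combination h
    · rcases mul_eq_zero.mp h with h | h
      · right; right; left; linear_combination h
      · right; right; right; linear_combination h
  · rintro (rfl | rfl | rfl | rfl) <;> ring
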